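/- Let d = 3 and define the local rule f : Fin 3 → Fin 3 → Fin 3 → Fin 3 by f x y z = z if y = 0, and f x y z = −z (mod 3, i.e. 0↦0, 1↦2, 2↦1) if y ∈ {1,2} (the 3-state CA rule 120120210120120210120120210). Then for every n ≥ 3, the global map F of the n-cell periodic-boundary CA is bijective. -/

import Mathlib

def f10 : Fin 3 → Fin 3 → Fin 3 → Fin 3 := fun _ y z => if y = 0 then z else -z

theorem stmt_10 (n : ℕ) (hn : 3 ≤ n) :
    Function.Bijective
      (fun (c : ZMod n → Fin 3) (i : ZMod n) => f10 (c (i - 1)) (c i) (c (i + 1))) := by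
  apply Function.bijective_iff_has_inverse.mpr
  refine ⟨fun b j => if b (j - 2) = 0 then b (j - 1) else -(b (j - 1)), ?_, ?_⟩
  · intro c
    funext j
    simp only [f10]
    have e1 : j - 2 + 1 = j - 1 := by ring
    have e2 : j - 1 + 1 = j := by ring
    simp only [e1, e2]
    generalize c (j - 2) = x
    generalize c (j - 1) = y
    generalize c j = z
    revert x y z
    decide
  · intro b
    funext i
    simp only [f10]
    have e1 : i + 1 - 2 = i - 1 := by ring
    have e2 : i + 1 - 1 = i := by ring
    rw [e1, e2]
    generalize b (i - 2) = x
    generalize b (i - 1) = y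
    generalize b i = z
    revert x y z
    decide
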